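/- Let E be a real inner product space, let h : E → ℝ be differentiable and σ-strongly convex (σ > 0), g : E → ℝ differentiable, f : E → ℝ, and let α ∈ ℝ, 0 < ε < δ < 1, L ≥ 0, L̄ > 0 with L̄ ≥ −α/((1 − δ)σ), and step sizes 0 < τ ≤ τ' with τ ≤ 1/L̄. Let v ∈ ℝ satisfy f(u) + g(u) ≥ v for all u ∈ E. Let x⁻, x, x⁺, y ∈ E and ξ ∈ E satisfy: (i) f(u) ≥ f(x⁺) + ⟨ξ, u − x⁺⟩ + (α/2)‖u − x⁺‖² for all u ∈ E; (ii) ξ + ∇g(y) + (1/τ)(∇h(x⁺) − ∇h(y)) = 0; (iii) g(x) ≥ g(y) + ⟨∇g(y), x − y⟩ − L·D_h(x, y); (iv) g(x⁺) ≤ g(y) + ⟨∇g(y), x⁺ − y⟩ + L̄·D_h(x⁺, y); (v) (δ − ε)·D_h(x⁻, x) ≥ (1 + L·τ')·D_h(x, y). Then, with Ψ := f + g, the Lyapunov values satisfy τ'·(Ψ(x) − v) + δ·D_h(x⁻, x) ≥ τ·(Ψ(x⁺) − v) + δ·D_h(x, x⁺) + ε·D_h(x⁻, x). (Lyapunov descent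 property of CoCaIn BPG.) -/

import Mathlib

open RealInnerProductSpace

lemma convex_first_order {E : Type*} [NormedAddCommGroup E] [InnerProductSpace ℝ E]
    (φ : E → ℝ) (φ' : E → E) (hc : ConvexOn ℝ Set.univ φ)
    (hd : ∀ z, HasFDerivAt φ (innerSL ℝ (φ' z)) z) (a b : E) :
    φ a ≥ φ b + ⟪φ' b, a - b⟫ := by
  set q : ℝ → ℝ := fun t => φ (b + t • (a - b)) with hq
  have hcurve : ∀ t : ℝ, HasDerivAt (fun s : ℝ => b + s • (a - b)) (a - b) t := by
    intro t
    simpa using ((hasDerivAt_id t).smul_const (a - b)).const_add b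
  have hqd : ∀ t : ℝ, HasDerivAt q ⟪φ' (b + t • (a - b)), a - b⟫ t := by
    intro t
    have := (hd (b + t • (a - b))).comp_hasDerivAt t (hcurve t)
    exact this
  have hqc : ConvexOn ℝ Set.univ q := by
    have := hc.comp_affineMap (AffineMap.lineMap b a)
    have heq : (φ ∘ (AffineMap.lineMap b a)) = q := by
      funext t; simp [hq, AffineMap.lineMap_apply, Function.comp]; rw [add_comm]
    rw [heq] at this
    simpa using this
  have hslope := hqc.le_slope_of_hasDerivAt (Set.mem_univ (0:ℝ)) (Set.mem_univ (1:ℝ))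
    one_pos (by simpa using hqd 0)
  have : ⟪φ' b, a - b⟫ ≤ q 1 - q 0 := by
    simpa [slope_def_field] using hslope
  have h1 : q 1 = φ a := by simp [hq]
  have h0 : q 0 = φ b := by simp [hq]
  rw [h1, h0] at this; linarith
lemma bregman_lower {E : Type*} [NormedAddCommGroup E] [InnerProductSpace ℝ E]
    (h : E → ℝ) (h' : E → E) (σ : ℝ)
    (hsc : StrongConvexOn Set.univ σ h)
    (hhdiff : ∀ z, HasFDerivAt h (innerSL ℝ (h' z)) z) (a b : E) :
    h a - h b - ⟪h' b, a - b⟫ ≥ σ / 2 * ‖a - b‖ ^ 2 := by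
  set φ : E → ℝ := fun z => h z - σ / 2 * ‖z‖ ^ 2 with hφ
  have hc : ConvexOn ℝ Set.univ φ := strongConvexOn_iff_convex.mp hsc
  have hd : ∀ z, HasFDerivAt φ (innerSL ℝ (h' z - σ • z)) z := by
    intro z
    have hsq := (hasFDerivAt_id (𝕜 := ℝ) z).inner ℝ (hasFDerivAt_id z)
    have hn : HasFDerivAt (fun w : E => σ / 2 * ‖w‖ ^ 2) (innerSL ℝ (σ • z)) z := by
      simp only [← real_inner_self_eq_norm_sq]
      refine (hsq.const_mul (σ / 2)).congr_fderiv ?_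
      ext w
      simp [real_inner_smul_left, real_inner_comm]
      ring
    have := (hhdiff z).sub hn
    refine this.congr_fderiv ?_
    ext w
    simp [inner_sub_left]
  have key := convex_first_order φ (fun z => h' z - σ • z) hc hd a b
  have hexp : ⟪h' b - σ • b, a - b⟫ = ⟪h' b, a - b⟫ - σ * ⟪b, a - b⟫ := by
    simp [inner_sub_left, real_inner_smul_left]
  have hib : σ * ⟪b, a - b⟫ = σ * ⟪b, a⟫ - σ * ‖b‖ ^ 2 := by
    rw [inner_sub_right, real_inner_self_eq_norm_sq]; ring
  have hnorm : σ / 2 * ‖a - b‖ ^ 2 = σ / 2 * ‖a‖ ^ 2 - σ * ⟪b, a⟫ + σ / 2 * ‖b‖ ^ 2 := by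
    rw [norm_sub_sq_real, real_inner_comm]; ring
  simp only [hφ] at key
  linarith [key, hexp]

set_option maxHeartbeats 1000000 in
/-- Lyapunov descent property of CoCaIn BPG: with `h` σ-strongly convex and
differentiable, `0 < ε < δ < 1`, `L ≥ 0`, `L̄ ≥ -α/((1-δ)σ)`, step sizes
`0 < τ ≤ τ'` with `τ ≤ 1/L̄`, and `v` a lower bound of `Ψ = f + g`, if the
subgradient inequality (i), the proximal optimality condition (ii), the
minorant (iii) and majorant (iv) inequalities, and the extrapolation
condition (v) hold, then
`τ'(Ψ(x) - v) + δ·D_h(x⁻, x) ≥ τ(Ψ(x⁺) - v) + δ·D_h(x, x⁺) + ε·D_h(x⁻, x)`,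
where `D_h(x, y) = h x - h y - ⟪∇h y, x - y⟫`. -/
theorem lyapunov_descent_cocain
    {E : Type*} [NormedAddCommGroup E] [InnerProductSpace ℝ E]
    (f g h : E → ℝ) (g' h' : E → E) (σ : ℝ) (hσ : 0 < σ)
    (hsc : StrongConvexOn Set.univ σ h)
    (hhdiff : ∀ z, HasFDerivAt h (innerSL ℝ (h' z)) z)
    (hgdiff : ∀ z, HasFDerivAt g (innerSL ℝ (g' z)) z)
    (α ε δ L Lbar τ τ' v : ℝ)
    (hε : 0 < ε) (hεδ : ε < δ) (hδ : δ < 1)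
    (hL : 0 ≤ L) (hLbar : 0 < Lbar) (hLbarα : Lbar ≥ -α / ((1 - δ) * σ))
    (hτ : 0 < τ) (hττ' : τ ≤ τ') (hτLbar : τ ≤ 1 / Lbar)
    (hv : ∀ u : E, f u + g u ≥ v)
    (xminus x xplus y ξ : E)
    (hsub : ∀ u : E, f u ≥ f xplus + ⟪ξ, u - xplus⟫ + (α / 2) * ‖u - xplus‖ ^ 2)
    (hopt : ξ + g' y + (1 / τ) • (h' xplus - h' y) = 0)
    (hlow : g x ≥ g y + ⟪g' y, x - y⟫ - L * (h x - h y - ⟪h' y, x - y⟫))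
    (hup : g xplus ≤ g y + ⟪g' y, xplus - y⟫ +
      Lbar * (h xplus - h y - ⟪h' y, xplus - y⟫))
    (hextra : (δ - ε) * (h xminus - h x - ⟪h' x, xminus - x⟫) ≥
      (1 + L * τ') * (h x - h y - ⟪h' y, x - y⟫)) :
    τ' * (f x + g x - v) + δ * (h xminus - h x - ⟪h' x, xminus - x⟫) ≥
      τ * (f xplus + g xplus - v) + δ * (h x - h xplus - ⟪h' xplus, x - xplus⟫) +
      ε * (h xminus - h x - ⟪h' x, xminus - x⟫) := by
  have hD2 := bregman_lower h h' σ hsc hhdiff x xplus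
  have hD3 := bregman_lower h h' σ hsc hhdiff xplus y
  have hD4 := bregman_lower h h' σ hsc hhdiff x y
  have hD3n : (0:ℝ) ≤ h xplus - h y - ⟪h' y, xplus - y⟫ := le_trans (by positivity) hD3
  have hD4n : (0:ℝ) ≤ h x - h y - ⟪h' y, x - y⟫ := le_trans (by positivity) hD4
  -- optimality condition, multiplied by τ
  have e1 : τ • (ξ + g' y + (1 / τ) • (h' xplus - h' y)) = (0:E) := by
    rw [hopt, smul_zero]
  have e2 : τ • ξ + τ • g' y + (h' xplus - h' y) = 0 := by
    rw [smul_add, smul_add, smul_smul, mul_one_div, div_self hτ.ne', one_smul] at e1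
    exact e1
  have F4 : τ * ⟪ξ, x - xplus⟫ + τ * ⟪g' y, x - xplus⟫ +
      (⟪h' xplus, x - xplus⟫ - ⟪h' y, x - xplus⟫) = 0 := by
    have := congrArg (fun z => ⟪z, x - xplus⟫) e2
    simpa [inner_add_left, inner_sub_left, real_inner_smul_left] using this
  have F5 : ⟪h' y, x - y⟫ = ⟪h' y, x - xplus⟫ + ⟪h' y, xplus - y⟫ := by
    rw [← inner_add_right, sub_add_sub_cancel]
  have F5g : τ * ⟪g' y, x - y⟫ = τ * ⟪g' y, x - xplus⟫ + τ * ⟪g' y, xplus - y⟫ := by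
    rw [← mul_add, ← inner_add_right, sub_add_sub_cancel]
  -- multiplied inequalities
  have M1 : τ * (f xplus + ⟪ξ, x - xplus⟫ + (α / 2) * ‖x - xplus‖ ^ 2) ≤ τ * f x :=
    mul_le_mul_of_nonneg_left (hsub x) hτ.le
  have M2 : τ * (g y + ⟪g' y, x - y⟫ - L * (h x - h y - ⟪h' y, x - y⟫)) ≤ τ * g x :=
    mul_le_mul_of_nonneg_left hlow hτ.le
  have M3 : τ * g xplus ≤
      τ * (g y + ⟪g' y, xplus - y⟫ + Lbar * (h xplus - h y - ⟪h' y, xplus - y⟫)) :=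
    mul_le_mul_of_nonneg_left hup hτ.le
  have hτL : τ * Lbar ≤ 1 := (le_div_iff₀ hLbar).mp hτLbar
  have P1 : (0:ℝ) ≤ (1 - τ * Lbar) * (h xplus - h y - ⟪h' y, xplus - y⟫) :=
    mul_nonneg (by linarith) hD3n
  have h1δσ : (0:ℝ) < (1 - δ) * σ := mul_pos (by linarith) hσ
  have hτα : τ * α ≥ -((1 - δ) * σ) := by
    have h1 : -α ≤ Lbar * ((1 - δ) * σ) := (div_le_iff₀ h1δσ).mp hLbarα
    nlinarith [mul_le_mul_of_nonneg_left h1 hτ.le, mul_le_mul_of_nonneg_right hτL h1δσ.le]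
  have P2 : (0:ℝ) ≤ ((1 - δ) * σ + τ * α) * ‖x - xplus‖ ^ 2 :=
    mul_nonneg (by linarith) (by positivity)
  have P3 : (1 - δ) * (σ / 2 * ‖x - xplus‖ ^ 2) ≤
      (1 - δ) * (h x - h xplus - ⟪h' xplus, x - xplus⟫) :=
    mul_le_mul_of_nonneg_left hD2 (by linarith)
  have P4 : (0:ℝ) ≤ (τ' - τ) * (f x + g x - v) :=
    mul_nonneg (by linarith) (by linarith [hv x])
  have P5 : (0:ℝ) ≤ (L * τ' - L * τ) * (h x - h y - ⟪h' y, x - y⟫) :=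
    mul_nonneg (by nlinarith) hD4n
  linarith [M1, M2, M3, F4, F5, F5g, P1, P2, P3, P4, P5, hextra]
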